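/- Let u ∈ ℝ^n, X ∈ ℝ^{n×m}, and Z ∈ ℝ^{n×k}, with u^T M_Z u > 0. Define X̃ := X − u · (u^T M_Z X)/(u^T M_Z u). Then the gradient with respect to β, evaluated via u = y − Xβ, of the function β ↦ (y−Xβ)^T P_Z (y−Xβ)/((y−Xβ)^T M_Z (y−Xβ)) equals −2 · X̃^T P_Z u / (u^T M_Z u), i.e., the j-th partial derivative is −2 u^T P_Z X̃_j / (u^T M_Z u) where X̃_j is the j-th column of X̃. -/

import Mathlib

open Matrix

/-- the j-th partial derivative of the Anderson–Rubin ratio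
`β ↦ (y−Xβ)ᵀ P_Z (y−Xβ) / ((y−Xβ)ᵀ M_Z (y−Xβ))` at `β` equals
`−2 uᵀ P_Z X̃_j / (uᵀ M_Z u)`, where `u = y − Xβ` and
`X̃ = X − u (uᵀ M_Z X)/(uᵀ M_Z u)`. -/
theorem stmt_3 {n m k : ℕ}
    (y : Fin n → ℝ) (X : Matrix (Fin n) (Fin m) ℝ) (Z : Matrix (Fin n) (Fin k) ℝ)
    (P : Matrix (Fin n) (Fin n) ℝ)
    (hPsymm : P.IsSymm) (hPidem : P * P = P) (hPZ : P * Z = Z)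
    (hPrange : ∃ C : Matrix (Fin k) (Fin n) ℝ, P = Z * C)
    (β : Fin m → ℝ)
    (u : Fin n → ℝ) (hu : u = y - X *ᵥ β)
    (hden : 0 < u ⬝ᵥ (1 - P) *ᵥ u)
    (Xt : Matrix (Fin n) (Fin m) ℝ)
    (hXt : Xt = X - (u ⬝ᵥ (1 - P) *ᵥ u)⁻¹ • Matrix.vecMulVec u (((1 - P) * X)ᵀ *ᵥ u)) :
    ∀ j : Fin m,
      HasDerivAt (fun t : ℝ =>
        ((y - X *ᵥ Function.update β j t) ⬝ᵥ P *ᵥ (y - X *ᵥ Function.update β j t)) /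
        ((y - X *ᵥ Function.update β j t) ⬝ᵥ (1 - P) *ᵥ (y - X *ᵥ Function.update β j t)))
        (-2 * (u ⬝ᵥ P *ᵥ fun i => Xt i j) / (u ⬝ᵥ (1 - P) *ᵥ u)) (β j) := by
  intro j
  set M : Matrix (Fin n) (Fin n) ℝ := 1 - P with hM
  have hMsymm : M.IsSymm := by
    unfold Matrix.IsSymm at *
    simp [hM, transpose_sub, hPsymm]
  set c : Fin n → ℝ := fun i => X i j with hc
  -- expansion of the residual
  have hv : ∀ t : ℝ, y - X *ᵥ Function.update β j t = u + (β j - t) • c := by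
    intro t
    have hupd : Function.update β j t = β + (t - β j) • (Pi.single j 1 : Fin m → ℝ) := by
      funext l
      by_cases h : l = j
      · subst h; simp
      · simp [Function.update, h, Pi.single_apply, h]
    rw [hupd, mulVec_add, mulVec_smul, mulVec_single, hu]
    funext i
    simp [hc]
    ring
  -- symmetric quadratic form expansion
  have hquad : ∀ (A : Matrix (Fin n) (Fin n) ℝ), A.IsSymm → ∀ s : ℝ,
      (u + s • c) ⬝ᵥ A *ᵥ (u + s • c)
        = u ⬝ᵥ A *ᵥ u + 2 * s * (u ⬝ᵥ A *ᵥ c) + s ^ 2 * (c ⬝ᵥ A *ᵥ c) := by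
    intro A hA s
    have hsw : c ⬝ᵥ A *ᵥ u = u ⬝ᵥ A *ᵥ c := by
      rw [dotProduct_mulVec, ← mulVec_transpose, hA, dotProduct_comm]
    simp [mulVec_add, mulVec_smul, dotProduct_add, add_dotProduct, smul_dotProduct,
      dotProduct_smul, hsw, smul_eq_mul]
    ring
  set N : ℝ := u ⬝ᵥ P *ᵥ u with hN
  set D : ℝ := u ⬝ᵥ M *ᵥ u with hD
  set a : ℝ := u ⬝ᵥ P *ᵥ c with ha
  set a' : ℝ := u ⬝ᵥ M *ᵥ c with ha'
  set b : ℝ := c ⬝ᵥ P *ᵥ c with hb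
  set b' : ℝ := c ⬝ᵥ M *ᵥ c with hb'
  have hDne : D ≠ 0 := ne_of_gt hden
  -- derivative of the polynomial pieces
  have h1 : HasDerivAt (fun t : ℝ => β j - t) (-1) (β j) := by
    simpa using (hasDerivAt_id (β j)).const_sub (β j)
  have hnum : HasDerivAt (fun t : ℝ => N + 2 * (β j - t) * a + (β j - t) ^ 2 * b)
      (-2 * a) (β j) := by
    have hA : HasDerivAt (fun t : ℝ => 2 * (β j - t) * a) (-2 * a) (β j) := by
      simpa [mul_comm, mul_assoc, mul_left_comm] using (h1.const_mul 2).mul_const a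
    have hB : HasDerivAt (fun t : ℝ => (β j - t) ^ 2 * b) 0 (β j) := by
      simpa using (h1.pow 2).mul_const b
    exact (((hasDerivAt_const (β j) N).add hA).add hB).congr_deriv (by ring)
  have hden' : HasDerivAt (fun t : ℝ => D + 2 * (β j - t) * a' + (β j - t) ^ 2 * b')
      (-2 * a') (β j) := by
    have hA : HasDerivAt (fun t : ℝ => 2 * (β j - t) * a') (-2 * a') (β j) := by
      simpa [mul_comm, mul_assoc, mul_left_comm] using (h1.const_mul 2).mul_const a'
    have hB : HasDerivAt (fun t : ℝ => (β j - t) ^ 2 * b') 0 (β j) := by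
      simpa using (h1.pow 2).mul_const b'
    exact (((hasDerivAt_const (β j) D).add hA).add hB).congr_deriv (by ring)
  have hd0 : D + 2 * (β j - β j) * a' + (β j - β j) ^ 2 * b' ≠ 0 := by
    simpa using hDne
  have hdiv := hnum.div hden' hd0
  -- the function equals the rational function
  have hfun : (fun t : ℝ =>
        ((y - X *ᵥ Function.update β j t) ⬝ᵥ P *ᵥ (y - X *ᵥ Function.update β j t)) /
        ((y - X *ᵥ Function.update β j t) ⬝ᵥ (1 - P) *ᵥ (y - X *ᵥ Function.update β j t)))
      = (fun t : ℝ => (N + 2 * (β j - t) * a + (β j - t) ^ 2 * b) /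
          (D + 2 * (β j - t) * a' + (β j - t) ^ 2 * b')) := by
    funext t
    rw [hv t, hquad P hPsymm, hquad M hMsymm]
  rw [hfun]
  -- match the derivative value
  have hwj : (((1 - P) * X)ᵀ *ᵥ u) j = a' := by
    simp only [ha', hc, hD, mulVec, dotProduct, transpose_apply, Matrix.mul_apply, hM]
    exact Finset.sum_congr rfl fun i _ => mul_comm _ _
  have hXtj : (fun i => Xt i j) = c - (D⁻¹ * a') • u := by
    funext i
    rw [hXt]
    simp only [Matrix.sub_apply, Matrix.smul_apply, vecMulVec_apply, smul_eq_mul,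
      Pi.sub_apply, Pi.smul_apply]
    rw [hwj]
    simp [hc]
    ring
  have hval : -2 * (u ⬝ᵥ P *ᵥ fun i => Xt i j) / D
      = (-2 * a * (D + 2 * (β j - β j) * a' + (β j - β j) ^ 2 * b')
          - (N + 2 * (β j - β j) * a + (β j - β j) ^ 2 * b) * (-2 * a'))
        / (D + 2 * (β j - β j) * a' + (β j - β j) ^ 2 * b') ^ 2 := by
    have : u ⬝ᵥ P *ᵥ (fun i => Xt i j) = a - D⁻¹ * a' * N := by
      rw [hXtj]
      simp [mulVec_sub, mulVec_smul, dotProduct_sub, dotProduct_smul, smul_eq_mul,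
        ha, hN]
    rw [this]
    field_simp
    have hD2 : D * D⁻¹ = 1 := mul_inv_cancel₀ hDne
    linear_combination (a * D - a' * N) * (D * D⁻¹ + 1) * hD2
  rw [hval]
  exact hdiv
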